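/- In the Laurent polynomial ring ℤ[Q_1^{±1}, Q_2^{±1}], let S = {Q_1, Q_2 Q_1^{-1}, Q_1^2 Q_2^{-1}, Q_1^{-1}, Q_1 Q_2^{-1}, Q_2 Q_1^{-2}}, and let σ_1 = Σ_{s∈S} s, σ_2 = Σ_{s<t, s,t∈S} s·t be the first and second elementary symmetric functions of the six elements of S. Then, as an identity of polynomials in μ over ℤ[Q_1^{±1},Q_2^{±1}]: ∏_{s∈S} (μ − s) = μ^6 − σ_1 μ^5 + σ_2 μ^4 − (σ_1² + 2σ_1 − 2σ_2 + 2) μ^3 + σ_2 μ^2 − σ_1 μ + 1. -/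
import Mathlib


open Polynomial Finset

noncomputable section

/-- The Laurent polynomial ring `ℤ[Q₁^{±1}, Q₂^{±1}]`. -/
abbrev LaurentZ2 : Type := AddMonoidAlgebra ℤ (ℤ × ℤ)

/-- The monomial `Q₁^a Q₂^b`. -/
noncomputable def mon (a b : ℤ) : LaurentZ2 := AddMonoidAlgebra.single (a, b) 1

/-- The six short-root monomials of `G₂`:
`Q₁, Q₂Q₁⁻¹, Q₁²Q₂⁻¹, Q₁⁻¹, Q₁Q₂⁻¹, Q₂Q₁⁻²`. -/
noncomputable def shortG2 : Fin 6 → LaurentZ2 :=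
  ![mon 1 0, mon (-1) 1, mon 2 (-1), mon (-1) 0, mon 1 (-1), mon (-2) 1]

lemma s0 : shortG2 0 = mon 1 0 := rfl
lemma s1 : shortG2 1 = mon (-1) 1 := rfl
lemma s2 : shortG2 2 = mon 2 (-1) := rfl
lemma s3 : shortG2 3 = mon (-1) 0 := rfl
lemma s4 : shortG2 4 = mon 1 (-1) := rfl
lemma s5 : shortG2 5 = mon (-2) 1 := rfl

lemma mon_mul (a b c d : ℤ) : mon a b * mon c d = mon (a+c) (b+d) := by
  simp [mon, AddMonoidAlgebra.single_mul_single, Prod.mk_add_mk]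

lemma mon_zero : mon 0 0 = 1 := by simp [mon]; rfl

lemma mon_sq (a b : ℤ) : mon a b ^ 2 = mon (2*a) (2*b) := by
  rw [sq, mon_mul]; ring_nf

lemma vieta6 {R : Type*} [CommRing R] (a b c d e f : R) :
    (X - C a) * (X - C b) * (X - C c) * (X - C d) * (X - C e) * (X - C f) =
      X^6 - C (a+b+c+d+e+f) * X^5
      + C (a*b+a*c+a*d+a*e+a*f+b*c+b*d+b*e+b*f+c*d+c*e+c*f+d*e+d*f+e*f) * X^4
      - C (a*b*c + a*b*d + a*b*e + a*b*f + a*c*d + a*c*e + a*c*f + a*d*e + a*d*f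
          + a*e*f + b*c*d + b*c*e + b*c*f + b*d*e + b*d*f + b*e*f + c*d*e + c*d*f
          + c*e*f + d*e*f) * X^3
      + C (a*b*c*d + a*b*c*e + a*b*c*f + a*b*d*e + a*b*d*f + a*b*e*f + a*c*d*e
          + a*c*d*f + a*c*e*f + a*d*e*f + b*c*d*e + b*c*d*f + b*c*e*f + b*d*e*f
          + c*d*e*f) * X^2
      - C (a*b*c*d*e + a*b*c*d*f + a*b*c*e*f + a*b*d*e*f + a*c*d*e*f + b*c*d*e*f) * X
      + C (a*b*c*d*e*f) := by
  simp only [map_add, map_mul]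
  ring

lemma h3 :
    let a := mon 1 0; let b := mon (-1) 1; let c := mon 2 (-1);
    let d := mon (-1) 0; let e := mon 1 (-1); let f := mon (-2) 1;
    a*b*c + a*b*d + a*b*e + a*b*f + a*c*d + a*c*e + a*c*f + a*d*e + a*d*f
      + a*e*f + b*c*d + b*c*e + b*c*f + b*d*e + b*d*f + b*e*f + c*d*e + c*d*f
      + c*e*f + d*e*f
    = (a+b+c+d+e+f)^2 + 2*(a+b+c+d+e+f)
      - 2*(a*b+a*c+a*d+a*e+a*f+b*c+b*d+b*e+b*f+c*d+c*e+c*f+d*e+d*f+e*f) + 2 := by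
  intro a b c d e f
  simp only [a,b,c,d,e,f]
  ring_nf
  simp only [mon_sq, mon_mul]
  norm_num [mon_zero]
  ring

lemma h4 :
    let a := mon 1 0; let b := mon (-1) 1; let c := mon 2 (-1);
    let d := mon (-1) 0; let e := mon 1 (-1); let f := mon (-2) 1;
    a*b*c*d + a*b*c*e + a*b*c*f + a*b*d*e + a*b*d*f + a*b*e*f + a*c*d*e
      + a*c*d*f + a*c*e*f + a*d*e*f + b*c*d*e + b*c*d*f + b*c*e*f + b*d*e*f
      + c*d*e*f
    = a*b+a*c+a*d+a*e+a*f+b*c+b*d+b*e+b*f+c*d+c*e+c*f+d*e+d*f+e*f := by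
  intro a b c d e f
  simp only [a,b,c,d,e,f]
  ring_nf
  simp only [mon_sq, mon_mul]
  norm_num [mon_zero]
  ring

lemma h5 :
    let a := mon 1 0; let b := mon (-1) 1; let c := mon 2 (-1);
    let d := mon (-1) 0; let e := mon 1 (-1); let f := mon (-2) 1;
    a*b*c*d*e + a*b*c*d*f + a*b*c*e*f + a*b*d*e*f + a*c*d*e*f + b*c*d*e*f
    = a+b+c+d+e+f := by
  intro a b c d e f
  simp only [a,b,c,d,e,f]
  ring_nf
  simp only [mon_sq, mon_mul]
  norm_num [mon_zero]
  ring

lemma h6 :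
    mon 1 0 * mon (-1) 1 * mon 2 (-1) * mon (-1) 0 * mon 1 (-1) * mon (-2) 1 = 1 := by
  simp only [mon_mul]
  norm_num [mon_zero]

theorem stmt6 :
    ∏ i : Fin 6, (X - C (shortG2 i)) =
      X ^ 6 - C (∑ i : Fin 6, shortG2 i) * X ^ 5 +
        C (∑ p ∈ Finset.univ.filter (fun p : Fin 6 × Fin 6 => p.1 < p.2),
            shortG2 p.1 * shortG2 p.2) * X ^ 4 -
        C ((∑ i : Fin 6, shortG2 i) ^ 2 + 2 * (∑ i : Fin 6, shortG2 i) -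
            2 * (∑ p ∈ Finset.univ.filter (fun p : Fin 6 × Fin 6 => p.1 < p.2),
              shortG2 p.1 * shortG2 p.2) + 2) * X ^ 3 +
        C (∑ p ∈ Finset.univ.filter (fun p : Fin 6 × Fin 6 => p.1 < p.2),
            shortG2 p.1 * shortG2 p.2) * X ^ 2 -
        C (∑ i : Fin 6, shortG2 i) * X + 1 := by
  have hsum : (∑ i : Fin 6, shortG2 i)
      = mon 1 0 + mon (-1) 1 + mon 2 (-1) + mon (-1) 0 + mon 1 (-1) + mon (-2) 1 := by
    simp only [Fin.sum_univ_six, s0, s1, s2, s3, s4, s5]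
  have hpair : (∑ p ∈ Finset.univ.filter (fun p : Fin 6 × Fin 6 => p.1 < p.2),
        shortG2 p.1 * shortG2 p.2)
      = mon 1 0 * mon (-1) 1 + mon 1 0 * mon 2 (-1) + mon 1 0 * mon (-1) 0
        + mon 1 0 * mon 1 (-1) + mon 1 0 * mon (-2) 1
        + mon (-1) 1 * mon 2 (-1) + mon (-1) 1 * mon (-1) 0 + mon (-1) 1 * mon 1 (-1)
        + mon (-1) 1 * mon (-2) 1
        + mon 2 (-1) * mon (-1) 0 + mon 2 (-1) * mon 1 (-1) + mon 2 (-1) * mon (-2) 1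
        + mon (-1) 0 * mon 1 (-1) + mon (-1) 0 * mon (-2) 1
        + mon 1 (-1) * mon (-2) 1 := by
    rw [Finset.sum_filter, ← Finset.univ_product_univ, Finset.sum_product]
    simp only [Fin.sum_univ_six, s0, s1, s2, s3, s4, s5]
    simp (config := { decide := true }) only [ite_true, ite_false]
    ring
  rw [hsum, hpair, Fin.prod_univ_six]
  simp only [s0, s1, s2, s3, s4, s5]
  rw [vieta6, h3, h4, h5, h6, map_one]

end
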